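/- Let n ≥ 1, y ∈ ℝ^{n²}, β > 0. Let 𝒟 : ℝ^{n²} → ℝ^{2n²} be the discrete gradient operator with periodic boundary conditions, ((𝒟x)_{i,j})₁ = x_{i+1,j} − x_{i,j}, ((𝒟x)_{i,j})₂ = x_{i,j+1} − x_{i,j} (indices mod n), and let div : ℝ^{2n²} → ℝ^{n²} be the unique linear operator satisfying ⟨𝒟x, p⟩ = −⟨x, div(p)⟩ for all x, p. Let 𝒫 = {p ∈ ℝ^{2n²} : p_i² + p_{i+n²}² ≤ 1 for all i = 1,…,n²}, and let 𝒲(p) = ‖β div(p) − y‖². If {p⁽ᵏ⁾} ⊂ 𝒫 is a sequence such that every accumulation point p̄ of {p⁽ᵏ⁾} is a stationary point of min_{p ∈ 𝒫} 𝒲(p) (i.e. ∇𝒲(p̄)ᵀ(q − p̄) ≥ 0 for all q ∈ 𝒫), then the sequence x⁽ᵏ⁾ = y − β div(p⁽ᵏ⁾) converges to the unique minimizer over ℝ^{n²} of the primal ROF functional (1/(2β))‖x − y‖² + J_R^{TV}(x), where J_R^{TV}(x) = Σ_{i,j=1}^n √(((𝒟x)_{i,j})₁² + ((𝒟x)_{i,j})₂²).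 -/

import Mathlib

open RealInnerProductSpace

private lemma aux_cs (a b c d : ℝ) (h : c ^ 2 + d ^ 2 ≤ 1) :
    a * c + b * d ≤ Real.sqrt (a ^ 2 + b ^ 2) := by
  have hs := Real.sq_sqrt (show (0:ℝ) ≤ a ^ 2 + b ^ 2 by positivity)
  have hnn := Real.sqrt_nonneg (a ^ 2 + b ^ 2)
  rcases eq_or_lt_of_le hnn with hz | hpos
  · have ha : a = 0 := by nlinarith [sq_nonneg a, sq_nonneg b]
    have hb : b = 0 := by nlinarith [sq_nonneg a, sq_nonneg b]
    simp [ha, hb]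
  · nlinarith [sq_nonneg (a - Real.sqrt (a ^ 2 + b ^ 2) * c),
      sq_nonneg (b - Real.sqrt (a ^ 2 + b ^ 2) * d),
      mul_nonneg (mul_nonneg hnn hnn) (sub_nonneg.2 h)]

private noncomputable def Jtv (n : ℕ) [NeZero n]
    (x : EuclideanSpace ℝ (Fin n × Fin n)) : ℝ :=
  ∑ i : Fin n, ∑ j : Fin n,
    Real.sqrt ((x (i + 1, j) - x (i, j)) ^ 2 + (x (i, j + 1) - x (i, j)) ^ 2)

private lemma aux_inner (n : ℕ) (a b : EuclideanSpace ℝ ((Fin n × Fin n) × Fin 2)) :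
    ⟪a, b⟫ = ∑ w : Fin n × Fin n, (a (w, 0) * b (w, 0) + a (w, 1) * b (w, 1)) := by
  rw [PiLp.inner_apply, Fintype.sum_prod_type]
  simp [Fin.sum_univ_two, RCLike.inner_apply]
  exact Finset.sum_congr rfl fun x _ => by ring


/-- if every accumulation point of a sequence `{p⁽ᵏ⁾} ⊂ 𝒫` is a stationary
point of the dual ROF problem `min_{p ∈ 𝒫} ‖β div(p) − y‖²`, then `x⁽ᵏ⁾ = y − β div(p⁽ᵏ⁾)`
converges to the unique minimizer of the primal ROF functional
`(1/(2β))‖x − y‖² + J_R^{TV}(x)`. -/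
theorem dual_rof_stationary_implies_primal_convergence
    (n : ℕ) [NeZero n]
    (y : EuclideanSpace ℝ (Fin n × Fin n)) (β : ℝ) (hβ : 0 < β)
    -- the discrete gradient operator with periodic boundary conditions
    (Dop : EuclideanSpace ℝ (Fin n × Fin n) → EuclideanSpace ℝ ((Fin n × Fin n) × Fin 2))
    (hDop : ∀ (x : EuclideanSpace ℝ (Fin n × Fin n)) (i j : Fin n),
      Dop x ((i, j), 0) = x (i + 1, j) - x (i, j) ∧
      Dop x ((i, j), 1) = x (i, j + 1) - x (i, j))
    -- the discrete divergence: the (unique) operator adjoint to `−𝒟`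
    (dv : EuclideanSpace ℝ ((Fin n × Fin n) × Fin 2) → EuclideanSpace ℝ (Fin n × Fin n))
    (hdv : ∀ (x : EuclideanSpace ℝ (Fin n × Fin n))
      (p : EuclideanSpace ℝ ((Fin n × Fin n) × Fin 2)), ⟪Dop x, p⟫ = -⟪x, dv p⟫)
    -- the dual feasible set and objective
    (Pset : Set (EuclideanSpace ℝ ((Fin n × Fin n) × Fin 2)))
    (hPset : Pset = {p | ∀ q : Fin n × Fin n, (p (q, 0)) ^ 2 + (p (q, 1)) ^ 2 ≤ 1})
    (W : EuclideanSpace ℝ ((Fin n × Fin n) × Fin 2) → ℝ)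
    (hW : ∀ p, W p = ‖β • dv p - y‖ ^ 2)
    -- the primal ROF functional
    (F : EuclideanSpace ℝ (Fin n × Fin n) → ℝ)
    (hF : ∀ x, F x = (1 / (2 * β)) * ‖x - y‖ ^ 2
      + ∑ i : Fin n, ∑ j : Fin n,
          Real.sqrt ((x (i + 1, j) - x (i, j)) ^ 2 + (x (i, j + 1) - x (i, j)) ^ 2))
    -- the sequence in `𝒫` all of whose accumulation points are stationary for the dual
    (p : ℕ → EuclideanSpace ℝ ((Fin n × Fin n) × Fin 2))
    (hp : ∀ k, p k ∈ Pset)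
    (hstat : ∀ pbar : EuclideanSpace ℝ ((Fin n × Fin n) × Fin 2),
      (∃ φ : ℕ → ℕ, StrictMono φ ∧
        Filter.Tendsto (fun j => p (φ j)) Filter.atTop (nhds pbar)) →
      ∀ q ∈ Pset, 0 ≤ ⟪gradient W pbar, q - pbar⟫) :
    ∃ xstar : EuclideanSpace ℝ (Fin n × Fin n),
      (∀ x', F xstar ≤ F x') ∧
      (∀ w, (∀ x', F w ≤ F x') → w = xstar) ∧
      Filter.Tendsto (fun k => y - β • dv (p k)) Filter.atTop (nhds xstar) := by
  classical
  -- `F` in terms of `Jtv`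
  have hFJ : ∀ x, F x = (1 / (2 * β)) * ‖x - y‖ ^ 2 + Jtv n x := hF
  -- `dv` flipped adjoint identity
  have hdvx : ∀ x q, ⟪x, dv q⟫ = -⟪Dop x, q⟫ := fun x q => by rw [hdv]; ring
  -- `dv` is linear
  have dv_add : ∀ q r, dv (q + r) = dv q + dv r := by
    intro q r
    refine ext_inner_left ℝ fun x => ?_
    rw [inner_add_right, hdvx, hdvx, hdvx, inner_add_right]; ring
  have dv_smul : ∀ (c : ℝ) q, dv (c • q) = c • dv q := by
    intro c q
    refine ext_inner_left ℝ fun x => ?_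
    rw [real_inner_smul_right, hdvx, hdvx, real_inner_smul_right]; ring
  let dvL : EuclideanSpace ℝ ((Fin n × Fin n) × Fin 2) →ₗ[ℝ]
      EuclideanSpace ℝ (Fin n × Fin n) :=
    { toFun := dv, map_add' := dv_add, map_smul' := dv_smul }
  have dv_cont : Continuous dv := dvL.continuous_of_finiteDimensional
  -- `Jtv` via `Dop`
  have hJD : ∀ x, Jtv n x
      = ∑ w : Fin n × Fin n, Real.sqrt ((Dop x (w, 0)) ^ 2 + (Dop x (w, 1)) ^ 2) := by
    intro x
    rw [Jtv, Fintype.sum_prod_type]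
    exact Finset.sum_congr rfl fun i _ => Finset.sum_congr rfl fun j _ => by
      rw [(hDop x i j).1, (hDop x i j).2]
  -- step (i) : ⟪Dop x, q⟫ ≤ Jtv x for q ∈ Pset
  have hJineq : ∀ x q, q ∈ Pset → ⟪Dop x, q⟫ ≤ Jtv n x := by
    intro x q hq
    rw [hPset] at hq
    rw [aux_inner, hJD]
    exact Finset.sum_le_sum fun w _ => aux_cs _ _ _ _ (hq w)
  have hJineq' : ∀ x q, q ∈ Pset → ⟪x, dv q⟫ ≤ Jtv n x := by
    intro x q hq
    have hqneg : -q ∈ Pset := by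
      rw [hPset] at hq ⊢
      intro w
      have := hq w
      simpa using this
    have h1 := hJineq x (-q) hqneg
    have hdneg : dv (-q) = -dv q := by simpa using dv_smul (-1) q
    rw [hdv, hdneg, inner_neg_right, neg_neg] at h1
    exact h1
  -- the gradient of W
  have hgradW : ∀ (pb v : EuclideanSpace ℝ ((Fin n × Fin n) × Fin 2)),
      ⟪gradient W pb, v⟫ = 2 * β * ⟪β • dv pb - y, dv v⟫ := by
    intro pb v
    set A : EuclideanSpace ℝ ((Fin n × Fin n) × Fin 2) →L[ℝ] EuclideanSpace ℝ (Fin n × Fin n) :=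
      β • LinearMap.toContinuousLinearMap dvL with hA
    have hAapp : ∀ q, A q = β • dv q := fun q => rfl
    have hf : HasFDerivAt (fun q => A q - y) A pb := A.hasFDerivAt.sub_const y
    have hW' : W = fun q => ⟪A q - y, A q - y⟫ := funext fun q => by
      rw [hW, ← real_inner_self_eq_norm_sq, hAapp]
    have hD := hf.inner ℝ hf
    rw [← hW'] at hD
    have hgrad := (hasFDerivAt_iff_hasGradientAt.mp hD).gradient
    rw [hgrad, InnerProductSpace.toDual_symm_apply]
    simp only [ContinuousLinearMap.comp_apply, ContinuousLinearMap.prod_apply,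
      fderivInnerCLM_apply]
    rw [hAapp pb, hAapp v, real_inner_smul_right, real_inner_smul_left,
      real_inner_comm (dv v)]
    ring
  -- KEY: a feasible stationary point yields a strong minimizer of F
  have key : ∀ pbar ∈ Pset, (∀ q ∈ Pset, 0 ≤ ⟪gradient W pbar, q - pbar⟫) →
      ∀ x', F (y - β • dv pbar) + (1 / (2 * β)) * ‖x' - (y - β • dv pbar)‖ ^ 2 ≤ F x' := by
    intro pbar hpbar hst x'
    set xs := y - β • dv pbar with hxs
    have hbd : β • dv pbar - y = -xs := by rw [hxs]; abel
    -- stationarity reformulated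
    have hst' : ∀ q ∈ Pset, ⟪xs, dv q⟫ ≤ ⟪xs, dv pbar⟫ := by
      intro q hq
      have h0 := hst q hq
      rw [hgradW] at h0
      have hd : dv (q - pbar) = dv q - dv pbar := by
        have h4 := dv_add (q - pbar) pbar
        rw [sub_add_cancel] at h4
        rw [h4]; abel
      rw [hd, inner_sub_right, hbd, inner_neg_left, inner_neg_left] at h0
      nlinarith [h0]
    -- J xs = ⟪xs, dv pbar⟫
    have hJxs : Jtv n xs = ⟪xs, dv pbar⟫ := by
      have h1 : ⟪xs, dv pbar⟫ ≤ Jtv n xs := hJineq' xs pbar hpbar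
      set qs : EuclideanSpace ℝ ((Fin n × Fin n) × Fin 2) := WithLp.toLp 2 (fun z =>
        -(Dop xs z) / Real.sqrt ((Dop xs (z.1, 0)) ^ 2 + (Dop xs (z.1, 1)) ^ 2)) with hqs
      have hqsP : qs ∈ Pset := by
        rw [hPset]
        simp only [Set.mem_setOf_eq, hqs, PiLp.toLp_apply]
        intro w
        set a := Dop xs (w, 0) with ha
        set b := Dop xs (w, 1) with hb
        have hss : Real.sqrt (a ^ 2 + b ^ 2) ^ 2 = a ^ 2 + b ^ 2 :=
          Real.sq_sqrt (by positivity)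
        rcases eq_or_ne (Real.sqrt (a ^ 2 + b ^ 2)) 0 with hz | hz
        · rw [hz]; norm_num
        · have hne : a ^ 2 + b ^ 2 ≠ 0 := fun h => hz (by rw [h, Real.sqrt_zero])
          have hr : (-a / Real.sqrt (a ^ 2 + b ^ 2)) ^ 2
              + (-b / Real.sqrt (a ^ 2 + b ^ 2)) ^ 2
              = (a ^ 2 + b ^ 2) / Real.sqrt (a ^ 2 + b ^ 2) ^ 2 := by ring
          rw [hr, hss, div_self hne]
      have h2 : ⟪xs, dv qs⟫ = Jtv n xs := by
        rw [hdvx, aux_inner, hJD]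
        have hneg : ∀ (f : Fin n × Fin n → ℝ),
            -∑ w : Fin n × Fin n, f w = ∑ w : Fin n × Fin n, -f w := fun f => by simp
        rw [hneg]
        refine Finset.sum_congr rfl fun w _ => ?_
        simp only [hqs, PiLp.toLp_apply]
        set a := Dop xs (w, 0) with ha
        set b := Dop xs (w, 1) with hb
        have hr : -(a * (-a / Real.sqrt (a ^ 2 + b ^ 2))
            + b * (-b / Real.sqrt (a ^ 2 + b ^ 2)))
            = (a ^ 2 + b ^ 2) / Real.sqrt (a ^ 2 + b ^ 2) := by ring
        rw [hr, Real.div_sqrt]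
      linarith [hst' qs hqsP, h2, h1]
    -- assembling the strong minimality inequality
    have hJx' : ⟪x', dv pbar⟫ ≤ Jtv n x' := hJineq' x' pbar hpbar
    have hid0 := norm_sub_sq_real (x' - y) (xs - y)
    have hxx : (x' - y) - (xs - y) = x' - xs := by abel
    rw [hxx] at hid0
    have hin : ⟪x' - xs, y - xs⟫ = -⟪x' - y, xs - y⟫ + ‖xs - y‖ ^ 2 := by
      have h5 : y - xs = -(xs - y) := by abel
      rw [← hxx, h5, inner_neg_right, inner_sub_left, real_inner_self_eq_norm_sq]
      ring
    have hrel : β * ⟪x' - xs, dv pbar⟫ = ⟪x' - xs, y - xs⟫ := by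
      have h6 : y - xs = β • dv pbar := by rw [hxs]; abel
      rw [h6, real_inner_smul_right]
    have hsub : ⟪x' - xs, dv pbar⟫ = ⟪x', dv pbar⟫ - ⟪xs, dv pbar⟫ :=
      inner_sub_left _ _ _
    simp only [hFJ]
    have e1 : ‖x' - y‖ ^ 2 - ‖xs - y‖ ^ 2 - ‖x' - xs‖ ^ 2
        = -(2 * (β * ⟪x' - xs, dv pbar⟫)) := by
      rw [hrel]; linarith [hid0, hin]
    have e2 : 1 / (2 * β) * (‖x' - y‖ ^ 2 - ‖xs - y‖ ^ 2 - ‖x' - xs‖ ^ 2)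
        = -⟪x' - xs, dv pbar⟫ := by
      rw [e1]; field_simp
    nlinarith [e2, hsub, hJx', hJxs]
  -- Pset is compact
  have hPclosed : IsClosed Pset := by
    rw [hPset]
    have hrw : {q : EuclideanSpace ℝ ((Fin n × Fin n) × Fin 2) |
        ∀ w : Fin n × Fin n, (q (w, 0)) ^ 2 + (q (w, 1)) ^ 2 ≤ 1}
        = ⋂ w : Fin n × Fin n, {q : EuclideanSpace ℝ ((Fin n × Fin n) × Fin 2) |
            (q (w, 0)) ^ 2 + (q (w, 1)) ^ 2 ≤ 1} := by
      ext q; simp [Set.mem_iInter]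
    rw [hrw]
    refine isClosed_iInter fun w => isClosed_le ?_ continuous_const
    exact (((EuclideanSpace.proj ((w, 0) : (Fin n × Fin n) × Fin 2)).continuous.pow 2).add
      (((EuclideanSpace.proj ((w, 1) : (Fin n × Fin n) × Fin 2)).continuous.pow 2)))
  have hPbdd : Bornology.IsBounded Pset := by
    refine isBounded_iff_forall_norm_le.2 ⟨n, fun q hq => ?_⟩
    rw [hPset] at hq
    have hnorm := EuclideanSpace.norm_eq q
    have hsum : (∑ z : (Fin n × Fin n) × Fin 2, ‖q z‖ ^ 2) ≤ ((n : ℝ)) ^ 2 := by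
      rw [Fintype.sum_prod_type]
      have hb1 : ∀ w : Fin n × Fin n, (∑ k : Fin 2, ‖q (w, k)‖ ^ 2) ≤ 1 := by
        intro w
        have := hq w
        simp only [Fin.sum_univ_two, Real.norm_eq_abs, sq_abs]
        exact this
      calc (∑ w : Fin n × Fin n, ∑ k : Fin 2, ‖q (w, k)‖ ^ 2)
          ≤ ∑ _w : Fin n × Fin n, (1 : ℝ) := Finset.sum_le_sum fun w _ => hb1 w
        _ = (n : ℝ) * n := by simp [Finset.card_univ, mul_comm]
        _ = (n : ℝ) ^ 2 := by ring
    rw [hnorm]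
    calc Real.sqrt (∑ z : (Fin n × Fin n) × Fin 2, ‖q z‖ ^ 2)
        ≤ Real.sqrt ((n : ℝ) ^ 2) := Real.sqrt_le_sqrt hsum
      _ = n := by rw [Real.sqrt_sq (by positivity)]
  have hPcpt : IsCompact Pset := Metric.isCompact_of_isClosed_isBounded hPclosed hPbdd
  -- a first accumulation point
  obtain ⟨pbar0, hpbar0P, φ0, hφ0, hconv0⟩ := hPcpt.tendsto_subseq hp
  have hstat0 := hstat pbar0 ⟨φ0, hφ0, hconv0⟩
  set xstar := y - β • dv pbar0 with hxstar
  have hmin0 := key pbar0 hpbar0P hstat0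
  have hc2 : (0:ℝ) < 1 / (2 * β) := by positivity
  refine ⟨xstar, ?_, ?_, ?_⟩
  · intro x'
    nlinarith [hmin0 x', sq_nonneg ‖x' - xstar‖, hc2]
  · intro w hw
    have h1 := hmin0 w
    have h2 := hw xstar
    have h3 : ‖w - xstar‖ ^ 2 = 0 := le_antisymm (by nlinarith) (sq_nonneg _)
    exact norm_sub_eq_zero_iff.mp ((pow_eq_zero_iff (by norm_num : (2:ℕ) ≠ 0)).mp h3)
  · -- convergence of the primal iterates
    apply Filter.tendsto_of_subseq_tendsto
    intro ns hns
    obtain ⟨pbar, hpbarP, ms, hms, hconv⟩ := hPcpt.tendsto_subseq (fun j => hp (ns j))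
    refine ⟨ms, ?_⟩
    obtain ⟨l, hl, hmono⟩ := Filter.strictMono_subseq_of_tendsto_atTop
      (hns.comp hms.tendsto_atTop)
    have hacc : ∃ φ : ℕ → ℕ, StrictMono φ ∧
        Filter.Tendsto (fun j => p (φ j)) Filter.atTop (nhds pbar) :=
      ⟨(fun j => ns (ms j)) ∘ l, hmono, hconv.comp hl.tendsto_atTop⟩
    have hminp := key pbar hpbarP (hstat pbar hacc)
    have h1 := hminp xstar
    have h2 := hmin0 (y - β • dv pbar)
    have h4 : xstar = y - β • dv pbar := by
      have h5 : ‖xstar - (y - β • dv pbar)‖ ^ 2 = 0 :=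
        le_antisymm (by nlinarith) (sq_nonneg _)
      exact norm_sub_eq_zero_iff.mp ((pow_eq_zero_iff (by norm_num : (2:ℕ) ≠ 0)).mp h5)
    have hcont : Continuous (fun q : EuclideanSpace ℝ ((Fin n × Fin n) × Fin 2) =>
        y - β • dv q) := continuous_const.sub (dv_cont.const_smul β)
    have hlim := (hcont.tendsto pbar).comp hconv
    rw [← h4] at hlim
    exact hlim
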